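/- Let d ≥ 1 and m ≥ 1 be integers and let μ⁺ and μ⁻ be Borel measures on (ℝ^d)^m, with μ⁻ a finite measure. For t > 0 and x ∈ ℝ^d write A_{t,x} = {y ∈ (ℝ^d)^m : y_i + x ∈ [−t,t]^d for all i = 1,…,m}. Suppose there exist constants κ ≥ 0 and T > 0 such that for all t ≥ T, ∫⁻_{x ∈ [−t,t]^d} μ⁺(A_{t,x}) dx ≤ κ·t^d + ∫⁻_{x ∈ [−t,t]^d} μ⁻(A_{t,x}) dx. Then μ⁺ is a finite measure, and μ⁺((ℝ^d)^m) ≤ κ + 2^d · μ⁻((ℝ^d)^m). -/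

import Mathlib

open MeasureTheory

/-- Reduction step in the proof of Brillinger mixing: if `μ⁻` is finite and
`∫⁻_{x ∈ [−t,t]^d} μ⁺(A_{t,x}) dx ≤ κ t^d + ∫⁻_{x ∈ [−t,t]^d} μ⁻(A_{t,x}) dx` for all `t ≥ T`,
where `A_{t,x} = {y | ∀ i, y i + x ∈ [−t,t]^d}`, then `μ⁺` is finite with total mass at most
`κ + 2^d μ⁻((ℝ^d)^m)`. -/
theorem measure_finite_of_translate_bound_sub (d m : ℕ) (hd : 1 ≤ d) (hm : 1 ≤ m)
    (μp μm : Measure (Fin m → Fin d → ℝ)) [IsFiniteMeasure μm]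
    (κ T : ℝ) (hκ : 0 ≤ κ) (hT : 0 < T)
    (h : ∀ t : ℝ, T ≤ t →
      (∫⁻ x in Set.Icc (fun _ : Fin d => -t) (fun _ => t),
        μp {y : Fin m → Fin d → ℝ |
            ∀ i, y i + x ∈ Set.Icc (fun _ : Fin d => -t) (fun _ => t)})
        ≤ ENNReal.ofReal (κ * t ^ d) +
          ∫⁻ x in Set.Icc (fun _ : Fin d => -t) (fun _ => t),
            μm {y : Fin m → Fin d → ℝ |
                ∀ i, y i + x ∈ Set.Icc (fun _ : Fin d => -t) (fun _ => t)}) :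
    μp Set.univ ≤ ENNReal.ofReal κ + 2 ^ d * μm Set.univ := by
  -- family of balls
  set B : ℕ → Set (Fin m → Fin d → ℝ) :=
    fun n => Set.Icc (fun _ _ => -(n : ℝ)) (fun _ _ => (n : ℝ)) with hB
  have hBmono : Monotone B := by
    intro a b hab
    apply Set.Icc_subset_Icc <;> intro i <;> intro j <;> simp <;>
      exact_mod_cast hab
  have hBunion : (⋃ n, B n) = Set.univ := by
    ext y
    simp only [Set.mem_iUnion, Set.mem_univ, iff_true, hB, Set.mem_Icc]
    obtain ⟨n, hn⟩ := exists_nat_ge ‖y‖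
    refine ⟨n, ?_, ?_⟩ <;> intro i <;> intro j
    · have := abs_le.mp ((norm_le_pi_norm (y i) j).trans ((norm_le_pi_norm y i).trans hn))
      · exact this.1
    · have := abs_le.mp ((norm_le_pi_norm (y i) j).trans ((norm_le_pi_norm y i).trans hn))
      · exact this.2
  have key : ∀ n : ℕ, μp (B n) ≤ ENNReal.ofReal κ + 2 ^ d * μm Set.univ := by
    intro n
    set t : ℝ := max T (2 * n) with ht
    have htT : T ≤ t := le_max_left _ _
    have ht0 : 0 < t := lt_of_lt_of_le hT htT
    have htn : 2 * (n : ℝ) ≤ t := le_max_right _ _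
    have hn0 : (0:ℝ) ≤ n := Nat.cast_nonneg n
    have hnt : (n : ℝ) ≤ t := by linarith
    -- small cube S
    set S : Set (Fin d → ℝ) := Set.Icc (fun _ => -(t - n)) (fun _ => t - n) with hS
    have hSsub : S ⊆ Set.Icc (fun _ : Fin d => -t) (fun _ => t) := by
      apply Set.Icc_subset_Icc <;> intro j <;> simp <;> linarith
    -- lower bound for LHS
    have lower : μp (B n) * ENNReal.ofReal (2 * (t - n)) ^ d ≤
        ∫⁻ x in Set.Icc (fun _ : Fin d => -t) (fun _ => t),
          μp {y : Fin m → Fin d → ℝ |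
              ∀ i, y i + x ∈ Set.Icc (fun _ : Fin d => -t) (fun _ => t)} := by
      have volS : volume S = ENNReal.ofReal (2 * (t - n)) ^ d := by
        rw [hS, Real.volume_Icc_pi]
        simp [Finset.prod_const]
        ring_nf
        rw [show t * 2 - (n:ℝ) * 2 = (t - n) * 2 by ring, ENNReal.ofReal_mul (by linarith),
          ENNReal.ofReal_ofNat, mul_pow]
      calc μp (B n) * ENNReal.ofReal (2 * (t - n)) ^ d
          = ∫⁻ _ in S, μp (B n) := by rw [setLIntegral_const, volS]
        _ ≤ ∫⁻ x in S,
              μp {y : Fin m → Fin d → ℝ |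
                  ∀ i, y i + x ∈ Set.Icc (fun _ : Fin d => -t) (fun _ => t)} := by
            apply setLIntegral_mono' measurableSet_Icc
            intro x hx
            apply measure_mono
            intro y hy
            simp only [Set.mem_setOf_eq, Set.mem_Icc] at *
            obtain ⟨hy1, hy2⟩ := hy
            obtain ⟨hx1, hx2⟩ := hx
            intro i
            constructor <;> intro j <;>
              [skip; skip] <;>
              · have h1 := hy1 i j
                have h2 := hy2 i j
                have h3 := hx1 j
                have h4 := hx2 j
                simp only [Pi.add_apply, Pi.neg_apply] at *
                simp
                linarith
        _ ≤ _ := lintegral_mono_set hSsub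
    -- upper bound for RHS
    have upper : (∫⁻ x in Set.Icc (fun _ : Fin d => -t) (fun _ => t),
          μm {y : Fin m → Fin d → ℝ |
              ∀ i, y i + x ∈ Set.Icc (fun _ : Fin d => -t) (fun _ => t)})
        ≤ μm Set.univ * ENNReal.ofReal (2 * t) ^ d := by
      calc _ ≤ ∫⁻ _ in Set.Icc (fun _ : Fin d => -t) (fun _ => t), μm Set.univ :=
            lintegral_mono fun x => measure_mono (Set.subset_univ _)
        _ = μm Set.univ * ENNReal.ofReal (2 * t) ^ d := by
            rw [setLIntegral_const, Real.volume_Icc_pi]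
            simp [Finset.prod_const]
            ring_nf
            rw [ENNReal.ofReal_mul ht0.le, ENNReal.ofReal_ofNat, mul_pow]
            ring
    have hmain := (lower.trans (h t htT)).trans (add_le_add le_rfl upper)
    have e1 : ENNReal.ofReal (κ * t ^ d) = ENNReal.ofReal κ * ENNReal.ofReal t ^ d := by
      rw [ENNReal.ofReal_mul hκ, ENNReal.ofReal_pow ht0.le]
    have e2 : ENNReal.ofReal (2 * t) ^ d = 2 ^ d * ENNReal.ofReal t ^ d := by
      rw [ENNReal.ofReal_mul (by norm_num), ENNReal.ofReal_ofNat 2, mul_pow]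
    have e3 : ENNReal.ofReal t ^ d ≤ ENNReal.ofReal (2 * (t - n)) ^ d :=
      pow_le_pow_left₀ (zero_le) (ENNReal.ofReal_le_ofReal (by linarith)) d
    have hfin : μp (B n) * ENNReal.ofReal t ^ d ≤
        (ENNReal.ofReal κ + 2 ^ d * μm Set.univ) * ENNReal.ofReal t ^ d := by
      calc μp (B n) * ENNReal.ofReal t ^ d
          ≤ μp (B n) * ENNReal.ofReal (2 * (t - n)) ^ d := mul_le_mul_right e3 _
        _ ≤ ENNReal.ofReal (κ * t ^ d) + μm Set.univ * ENNReal.ofReal (2 * t) ^ d := hmain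
        _ = (ENNReal.ofReal κ + 2 ^ d * μm Set.univ) * ENNReal.ofReal t ^ d := by
            rw [e1, e2]; ring
    exact (ENNReal.mul_le_mul_iff_left (pow_ne_zero _ (by simp [ht0]))
      (ENNReal.pow_ne_top ENNReal.ofReal_ne_top)).mp hfin
  calc μp Set.univ = μp (⋃ n, B n) := by rw [hBunion]
    _ = ⨆ n, μp (B n) := hBmono.directed_le.measure_iUnion
    _ ≤ _ := iSup_le key
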